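/- Let Γ ≤ G₁ × G₂ × G₃ be a 2-injective 3-factor subdirect product of finite groups. Then for every i ∈ {1,2,3}, the index [Gᵢ : πᵢ(H)] equals the index [Γ : H]. -/

import Mathlib

/-- `Γ ≤ G₁ × G₂ × G₃` is a (3-factor) subdirect product:
the projection to each factor is surjective on `Γ`. -/
def IsSubdirect3 {G₁ G₂ G₃ : Type*} [Group G₁] [Group G₂] [Group G₃]
    (Γ : Subgroup (G₁ × G₂ × G₃)) : Prop :=
  (∀ x : G₁, ∃ g ∈ Γ, g.1 = x) ∧ (∀ x : G₂, ∃ g ∈ Γ, g.2.1 = x) ∧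
    (∀ x : G₃, ∃ g ∈ Γ, g.2.2 = x)

/-- `Γ ≤ G₁ × G₂ × G₃` is 2-injective: for each `i`, the projection of `Γ` onto
the product of the two factors other than `Gᵢ` is injective on `Γ`. -/
def IsTwoInjective3 {G₁ G₂ G₃ : Type*} [Group G₁] [Group G₂] [Group G₃]
    (Γ : Subgroup (G₁ × G₂ × G₃)) : Prop :=
  (∀ g ∈ Γ, ∀ h ∈ Γ, g.2.1 = h.2.1 → g.2.2 = h.2.2 → g = h) ∧
  (∀ g ∈ Γ, ∀ h ∈ Γ, g.1 = h.1 → g.2.2 = h.2.2 → g = h) ∧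
  (∀ g ∈ Γ, ∀ h ∈ Γ, g.1 = h.1 → g.2.1 = h.2.1 → g = h)


lemma aux_index {G Gi : Type*} [Group G] [Group Gi] (Γ H : Subgroup G) (π : G →* Gi)
    (hHΓ : H ≤ Γ) (hker : Γ ⊓ π.ker ≤ H) (hsurj : ∀ x, ∃ g ∈ Γ, π g = x) :
    (H.map π).index = H.relIndex Γ := by
  set f : Γ →* Gi := π.comp Γ.subtype with hf
  have hmap : (H.subgroupOf Γ).map f = H.map π := by
    rw [hf, ← Subgroup.map_map, Subgroup.subgroupOf_map_subtype, inf_of_le_left hHΓ]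
  have hfsurj : Function.Surjective f := by
    intro x
    obtain ⟨g, hg, h⟩ := hsurj x
    exact ⟨⟨g, hg⟩, h⟩
  have hfker : f.ker ≤ H.subgroupOf Γ := by
    intro γ hγ
    exact hker ⟨γ.2, hγ⟩
  rw [← hmap, (H.subgroupOf Γ).index_map_eq hfsurj hfker, Subgroup.relIndex]

theorem statement_1 {G₁ G₂ G₃ : Type*} [Group G₁] [Group G₂] [Group G₃]
    [Finite G₁] [Finite G₂] [Finite G₃]
    (Γ : Subgroup (G₁ × G₂ × G₃))
    (hsd : IsSubdirect3 Γ) (h2inj : IsTwoInjective3 Γ) :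
    let π₁ : (G₁ × G₂ × G₃) →* G₁ := MonoidHom.fst G₁ (G₂ × G₃)
    let π₂ : (G₁ × G₂ × G₃) →* G₂ :=
      (MonoidHom.fst G₂ G₃).comp (MonoidHom.snd G₁ (G₂ × G₃))
    let π₃ : (G₁ × G₂ × G₃) →* G₃ :=
      (MonoidHom.snd G₂ G₃).comp (MonoidHom.snd G₁ (G₂ × G₃))
    let H : Subgroup (G₁ × G₂ × G₃) :=
      (Γ ⊓ π₁.ker) ⊔ (Γ ⊓ π₂.ker) ⊔ (Γ ⊓ π₃.ker)
    (H.map π₁).index = H.relIndex Γ ∧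
    (H.map π₂).index = H.relIndex Γ ∧
    (H.map π₃).index = H.relIndex Γ := by
  intro π₁ π₂ π₃ H
  have hHΓ : H ≤ Γ :=
    sup_le (sup_le inf_le_left inf_le_left) inf_le_left
  refine ⟨aux_index Γ H π₁ hHΓ (le_sup_of_le_left le_sup_left) hsd.1,
    aux_index Γ H π₂ hHΓ (le_sup_of_le_left le_sup_right) hsd.2.1,
    aux_index Γ H π₃ hHΓ le_sup_right hsd.2.2⟩
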